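/- If M is a sufficient adjustment set in the sense of conditional independence Y1^0 ⫫ A | M (not just mean-independence), and additive homogeneous confounding holds for (Y0^0, Y1^0) given M, then the ATT identification formula holds: E(Y1^1 - Y1^0 | A=1) = [E(Y1 | A=1) - E(Y0 | A=1)] - [E(Y1 | A=0) - E(Y0 | A=0)], assuming no anticipation (Y0 = Y0^0) and causal consistency (A=0 implies Y1 = Y1^0; A=1 implies Y1 = Y1^1). -/

import Mathlib

open MeasureTheory ProbabilityTheory

/-- If `M` is a sufficient adjustment set in the conditional-independence
sense `Y1^0 ⫫ A | M`, additive homogeneous confounding holds for `(Y0^0, Y1^0)` given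
`M`, no anticipation (`Y0 = Y0^0`) and causal consistency hold, then the ATT
identification formula holds. -/
theorem stmt_15 {Ω : Type*} {mΩ : MeasurableSpace Ω} [StandardBorelSpace Ω]
    {β : Type*} [MeasurableSpace β]
    (μ : Measure Ω) [IsProbabilityMeasure μ]
    (A Y0 Y1 Y0p0 Y1p0 Y1p1 : Ω → ℝ) (M : Ω → β) (hMmeas : Measurable M)
    (hAmeas : Measurable A) (hAbin : ∀ ω, A ω = 0 ∨ A ω = 1)
    (hpos : 0 < μ {ω | A ω = 1}) (hlt : μ {ω | A ω = 1} < 1)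
    (hY0int : Integrable Y0 μ) (hY1int : Integrable Y1 μ)
    (hY0p0 : Integrable Y0p0 μ) (hY1p0 : Integrable Y1p0 μ) (hY1p1 : Integrable Y1p1 μ)
    -- conditional independence Y1^0 ⫫ A | M
    (hCI : CondIndepFun (MeasurableSpace.comap M inferInstance)
      (MeasurableSpace.comap_le_iff_le_map.mpr hMmeas.le_map) Y1p0 A μ)
    -- mean sufficiency for both time points
    (hsuff0 : μ[Y0p0 | MeasurableSpace.comap (fun ω => (A ω, M ω)) inferInstance]
        =ᵐ[μ] μ[Y0p0 | MeasurableSpace.comap M inferInstance])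
    (hsuff1 : μ[Y1p0 | MeasurableSpace.comap (fun ω => (A ω, M ω)) inferInstance]
        =ᵐ[μ] μ[Y1p0 | MeasurableSpace.comap M inferInstance])
    -- additive homogeneous confounding
    (hAHC : μ[fun ω => Y1p0 ω - Y0p0 ω | MeasurableSpace.comap M inferInstance]
        =ᵐ[μ] fun _ => ∫ ω, (Y1p0 ω - Y0p0 ω) ∂μ)
    -- no anticipation and causal consistency
    (hNA : ∀ ω, Y0 ω = Y0p0 ω)
    (hCons0 : ∀ ω, A ω = 0 → Y1 ω = Y1p0 ω)
    (hCons1 : ∀ ω, A ω = 1 → Y1 ω = Y1p1 ω) :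
    (∫ ω in {ω | A ω = 1}, (Y1p1 ω - Y1p0 ω) ∂μ) / (μ {ω | A ω = 1}).toReal
      = ((∫ ω in {ω | A ω = 1}, Y1 ω ∂μ) / (μ {ω | A ω = 1}).toReal
          - (∫ ω in {ω | A ω = 1}, Y0 ω ∂μ) / (μ {ω | A ω = 1}).toReal)
        - ((∫ ω in {ω | A ω = 0}, Y1 ω ∂μ) / (μ {ω | A ω = 0}).toReal
          - (∫ ω in {ω | A ω = 0}, Y0 ω ∂μ) / (μ {ω | A ω = 0}).toReal) := by
  classical
  have hAM : Measurable (fun ω => (A ω, M ω)) := hAmeas.prodMk hMmeas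
  have hm1 : MeasurableSpace.comap (fun ω => (A ω, M ω)) inferInstance ≤ mΩ :=
    MeasurableSpace.comap_le_iff_le_map.mpr hAM.le_map
  set c := ∫ ω, (Y1p0 ω - Y0p0 ω) ∂μ with hc
  have hS1 : MeasurableSet {ω | A ω = 1} := hAmeas (measurableSet_singleton 1)
  have hS0 : MeasurableSet {ω | A ω = 0} := hAmeas (measurableSet_singleton 0)
  have hS1m : MeasurableSet[MeasurableSpace.comap (fun ω => (A ω, M ω)) inferInstance]
      {ω | A ω = 1} :=
    ⟨({1} : Set ℝ) ×ˢ Set.univ, (measurableSet_singleton 1).prod MeasurableSet.univ,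
      by ext ω; simp [eq_comm]⟩
  have hS0m : MeasurableSet[MeasurableSpace.comap (fun ω => (A ω, M ω)) inferInstance]
      {ω | A ω = 0} :=
    ⟨({0} : Set ℝ) ×ˢ Set.univ, (measurableSet_singleton 0).prod MeasurableSet.univ,
      by ext ω; simp [eq_comm]⟩
  -- condexp of the difference is constant c
  have hce : μ[fun ω => Y1p0 ω - Y0p0 ω |
      MeasurableSpace.comap (fun ω => (A ω, M ω)) inferInstance] =ᵐ[μ] fun _ => c := by
    calc μ[fun ω => Y1p0 ω - Y0p0 ω |
          MeasurableSpace.comap (fun ω => (A ω, M ω)) inferInstance]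
        =ᵐ[μ] μ[Y1p0 | MeasurableSpace.comap (fun ω => (A ω, M ω)) inferInstance]
            - μ[Y0p0 | MeasurableSpace.comap (fun ω => (A ω, M ω)) inferInstance] :=
          condExp_sub hY1p0 hY0p0 _
      _ =ᵐ[μ] μ[Y1p0 | MeasurableSpace.comap M inferInstance]
            - μ[Y0p0 | MeasurableSpace.comap M inferInstance] := hsuff1.sub hsuff0
      _ =ᵐ[μ] μ[fun ω => Y1p0 ω - Y0p0 ω | MeasurableSpace.comap M inferInstance] :=
          (condExp_sub hY1p0 hY0p0 _).symm
      _ =ᵐ[μ] fun _ => c := hAHC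
  have key : ∀ s : Set Ω,
      MeasurableSet[MeasurableSpace.comap (fun ω => (A ω, M ω)) inferInstance] s →
      (∫ ω in s, Y1p0 ω ∂μ) - ∫ ω in s, Y0p0 ω ∂μ = c * (μ s).toReal := by
    intro s hs
    have h1 : ∫ ω in s, (Y1p0 ω - Y0p0 ω) ∂μ
        = ∫ ω in s, (μ[fun ω => Y1p0 ω - Y0p0 ω |
            MeasurableSpace.comap (fun ω => (A ω, M ω)) inferInstance]) ω ∂μ :=
      (setIntegral_condExp hm1 (hY1p0.sub hY0p0) hs).symm
    have h2 : ∫ ω in s, (μ[fun ω => Y1p0 ω - Y0p0 ω |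
          MeasurableSpace.comap (fun ω => (A ω, M ω)) inferInstance]) ω ∂μ
        = ∫ (_ : Ω) in s, c ∂μ := integral_congr_ae (ae_restrict_of_ae hce)
    have h3 : ∫ ω in s, (Y1p0 ω - Y0p0 ω) ∂μ
        = (∫ ω in s, Y1p0 ω ∂μ) - ∫ ω in s, Y0p0 ω ∂μ :=
      integral_sub hY1p0.integrableOn hY0p0.integrableOn
    rw [← h3, h1, h2, setIntegral_const, smul_eq_mul, mul_comm, Measure.real]
  set p := (μ {ω | A ω = 1}).toReal with hp
  set q := (μ {ω | A ω = 0}).toReal with hq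
  have hcompl : {ω | A ω = 0} = {ω | A ω = 1}ᶜ := by
    ext ω; simp only [Set.mem_compl_iff, Set.mem_setOf_eq]
    rcases hAbin ω with h | h <;> simp [h]
  have hμ0 : μ {ω | A ω = 0} = 1 - μ {ω | A ω = 1} := by
    rw [hcompl, prob_compl_eq_one_sub hS1]
  have hpne : p ≠ 0 := by
    simp only [hp]
    exact ENNReal.toReal_ne_zero.mpr ⟨hpos.ne', measure_ne_top μ _⟩
  have hqne : q ≠ 0 := by
    have h0 : μ {ω | A ω = 0} ≠ 0 := by
      rw [hμ0]; simpa using (tsub_pos_of_lt hlt).ne'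
    exact ENNReal.toReal_ne_zero.mpr ⟨h0, measure_ne_top μ _⟩
  have k1 := key _ hS1m
  have k0 := key _ hS0m
  rw [← hp] at k1; rw [← hq] at k0
  have e1 : ∫ ω in {ω | A ω = 1}, Y1 ω ∂μ = ∫ ω in {ω | A ω = 1}, Y1p1 ω ∂μ :=
    setIntegral_congr_fun hS1 (fun ω hω => hCons1 ω hω)
  have e0 : ∫ ω in {ω | A ω = 0}, Y1 ω ∂μ = ∫ ω in {ω | A ω = 0}, Y1p0 ω ∂μ :=
    setIntegral_congr_fun hS0 (fun ω hω => hCons0 ω hω)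
  have f1 : ∫ ω in {ω | A ω = 1}, Y0 ω ∂μ = ∫ ω in {ω | A ω = 1}, Y0p0 ω ∂μ := by
    simp_rw [hNA]
  have f0 : ∫ ω in {ω | A ω = 0}, Y0 ω ∂μ = ∫ ω in {ω | A ω = 0}, Y0p0 ω ∂μ := by
    simp_rw [hNA]
  have esub : ∫ ω in {ω | A ω = 1}, (Y1p1 ω - Y1p0 ω) ∂μ
      = (∫ ω in {ω | A ω = 1}, Y1p1 ω ∂μ) - ∫ ω in {ω | A ω = 1}, Y1p0 ω ∂μ :=
    integral_sub hY1p1.integrableOn hY1p0.integrableOn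
  rw [e1, e0, f1, f0, esub]
  set a := ∫ ω in {ω | A ω = 1}, Y1p1 ω ∂μ
  set b := ∫ ω in {ω | A ω = 1}, Y1p0 ω ∂μ
  set u := ∫ ω in {ω | A ω = 1}, Y0p0 ω ∂μ
  set v := ∫ ω in {ω | A ω = 0}, Y1p0 ω ∂μ
  set w := ∫ ω in {ω | A ω = 0}, Y0p0 ω ∂μ
  have hb : b = u + c * p := by linarith
  have hv : v = w + c * q := by linarith
  rw [hb, hv]
  field_simp
  ring
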